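/- Let $p_1,\dots,p_r$ and $q_1,\dots,q_r$ be integers, and define $P_1 = p_1$ and for $i \geq 2$, $P_i = p_i + q_i \sum_{\alpha=1}^{i-1} p_\alpha \prod_{\beta=\alpha+1}^{i-1} q_\beta \prod_{\beta=\alpha}^{i-1} q_\beta$. Then $P_1 \prod_{i=2}^r q_i - q_1 (P_1 - 1) \prod_{i=2}^r q_i - \sum_{i=2}^r P_i (q_i - 1) \prod_{j=i+1}^r q_j = B_r - A_r$, where $A_r = \sum_{\alpha=1}^{r} p_\alpha \prod_{\beta=\alpha+1}^{r} q_\beta \prod_{\beta=\alpha}^{r} q_\beta$ and $B_r = \sum_{\alpha=1}^r p_\alpha \prod_{\beta=\alpha+1}^r q_\beta + \prod_{\alpha=1}^r q_\alpha$. -/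

import Mathlib

/-- `A p q r = ∑_{α=1}^{r} p_α (∏_{β=α+1}^{r} q_β)(∏_{β=α}^{r} q_β)`. -/
def iterA (p q : ℕ → ℤ) (r : ℕ) : ℤ :=
  ∑ α ∈ Finset.Icc 1 r,
    p α * (∏ β ∈ Finset.Icc (α + 1) r, q β) * (∏ β ∈ Finset.Icc α r, q β)

/-- `B p q r = ∑_{α=1}^{r} p_α ∏_{β=α+1}^{r} q_β + ∏_{α=1}^{r} q_α`. -/
def iterB (p q : ℕ → ℤ) (r : ℕ) : ℤ :=
  (∑ α ∈ Finset.Icc 1 r, p α * ∏ β ∈ Finset.Icc (α + 1) r, q β) +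
    ∏ α ∈ Finset.Icc 1 r, q α

lemma iterA_succ (p q : ℕ → ℤ) (r : ℕ) :
    iterA p q (r + 1) = q (r + 1) * q (r + 1) * iterA p q r + p (r + 1) * q (r + 1) := by
  unfold iterA
  rw [Finset.sum_Icc_succ_top (by omega : 1 ≤ r + 1)]
  have h : ∀ α ∈ Finset.Icc 1 r,
      p α * (∏ β ∈ Finset.Icc (α + 1) (r + 1), q β) * (∏ β ∈ Finset.Icc α (r + 1), q β)
      = q (r + 1) * q (r + 1) *
        (p α * (∏ β ∈ Finset.Icc (α + 1) r, q β) * (∏ β ∈ Finset.Icc α r, q β)) := by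
    intro α hα
    rw [Finset.mem_Icc] at hα
    rw [Finset.prod_Icc_succ_top (by omega : α + 1 ≤ r + 1),
        Finset.prod_Icc_succ_top (by omega : α ≤ r + 1)]
    ring
  rw [Finset.sum_congr rfl h, ← Finset.mul_sum]
  rw [Finset.Icc_eq_empty (by omega : ¬ (r + 1 + 1 ≤ r + 1)), Finset.prod_empty,
      Finset.Icc_self, Finset.prod_singleton]
  ring

lemma iterB_succ (p q : ℕ → ℤ) (r : ℕ) :
    iterB p q (r + 1) = q (r + 1) * iterB p q r + p (r + 1) := by
  unfold iterB
  rw [Finset.sum_Icc_succ_top (by omega : 1 ≤ r + 1),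
      Finset.prod_Icc_succ_top (by omega : 1 ≤ r + 1)]
  have h : ∀ α ∈ Finset.Icc 1 r,
      p α * (∏ β ∈ Finset.Icc (α + 1) (r + 1), q β)
      = q (r + 1) * (p α * ∏ β ∈ Finset.Icc (α + 1) r, q β) := by
    intro α hα
    rw [Finset.mem_Icc] at hα
    rw [Finset.prod_Icc_succ_top (by omega : α + 1 ≤ r + 1)]
    ring
  rw [Finset.sum_congr rfl h, ← Finset.mul_sum]
  rw [Finset.Icc_eq_empty (by omega : ¬ (r + 1 + 1 ≤ r + 1)), Finset.prod_empty]
  ring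

theorem stmt5 (p q P : ℕ → ℤ) (r : ℕ) (hr : 1 ≤ r)
    (hP1 : P 1 = p 1)
    (hP : ∀ i : ℕ, 2 ≤ i →
      P i = p i + q i * ∑ α ∈ Finset.Icc 1 (i - 1),
        p α * (∏ β ∈ Finset.Icc (α + 1) (i - 1), q β) *
          (∏ β ∈ Finset.Icc α (i - 1), q β)) :
    P 1 * (∏ i ∈ Finset.Icc 2 r, q i)
      - q 1 * (P 1 - 1) * (∏ i ∈ Finset.Icc 2 r, q i)
      - ∑ i ∈ Finset.Icc 2 r, P i * (q i - 1) * ∏ j ∈ Finset.Icc (i + 1) r, q j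
    = iterB p q r - iterA p q r := by
  induction r, hr using Nat.le_induction with
  | base =>
      simp [iterA, iterB, Finset.Icc_eq_empty (by omega : ¬ (2 ≤ 1)), hP1]
      ring
  | succ r hr ih =>
      have hPr : P (r + 1) = p (r + 1) + q (r + 1) * iterA p q r := by
        have := hP (r + 1) (by omega)
        simpa [iterA] using this
      rw [Finset.prod_Icc_succ_top (by omega : 2 ≤ r + 1),
          Finset.sum_Icc_succ_top (by omega : 2 ≤ r + 1)]
      have h : ∀ i ∈ Finset.Icc 2 r,
          P i * (q i - 1) * (∏ j ∈ Finset.Icc (i + 1) (r + 1), q j)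
          = q (r + 1) * (P i * (q i - 1) * ∏ j ∈ Finset.Icc (i + 1) r, q j) := by
        intro i hi
        rw [Finset.mem_Icc] at hi
        rw [Finset.prod_Icc_succ_top (by omega : i + 1 ≤ r + 1)]
        ring
      rw [Finset.sum_congr rfl h, ← Finset.mul_sum,
          Finset.Icc_eq_empty (by omega : ¬ (r + 1 + 1 ≤ r + 1)), Finset.prod_empty,
          iterA_succ, iterB_succ, hPr]
      linear_combination q (r + 1) * ih
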